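/- (Theorem 3.1) Let p be an odd prime, K a complete field with a nonarchimedean multiplicative norm ‖·‖ satisfying ‖(p : K)‖ = p^{-1}, and ρ, q ∈ K with ρ ≠ q, ‖ρ − 1‖ < p^{-1/(p−1)} and ‖q − 1‖ < p^{-1/(p−1)}. Let μ : ℤ_p × ℕ → K satisfy: (i) μ(x,n) = μ(y,n) whenever ‖x − y‖_p ≤ p^{-n} (μ is constant on balls), and (ii) there is C > 0 with ‖[p^n]_{ρ,q} μ(x,n) − [p^{n+1}]_{ρ,q} μ(x,n+1)‖ ≤ C · ‖ρ^{p^n} − q^{p^n}‖ for all x ∈ ℤ_p, n ∈ ℕ (μ is strongly (ρ,q)-invariant). Then there exist a function f_μ : ℤ_p → K and a constant C₁ ≥ 0 such that for every x ∈ ℤ_p the sequence [p^n]_{ρ,q} μ(x,n) converges to f_μ(x) as n → ∞, and ‖f_μ(x) − f_μ(y)‖ ≤ C₁ · ‖x − y‖_p for all x, y ∈ ℤ_p (f_μ is a Lipschitz function). -/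

import Mathlib

/-- The (ρ,q)-number `[m]_{ρ,q} = (ρ^m - q^m)/(ρ - q)`. -/
noncomputable def pqNum {K : Type*} [Field K] (ρ q : K) (m : ℕ) : K :=
  (ρ ^ m - q ^ m) / (ρ - q)

section Aux

variable {K : Type*} [NormedField K]

lemma aux_norm_sub_le (hna : ∀ x y : K, ‖x + y‖ ≤ max ‖x‖ ‖y‖) (x y : K) :
    ‖x - y‖ ≤ max ‖x‖ ‖y‖ := by
  simpa [sub_eq_add_neg] using hna x (-y)

lemma aux_norm_sum_le (hna : ∀ x y : K, ‖x + y‖ ≤ max ‖x‖ ‖y‖) {ι : Type*}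
    (s : Finset ι) (f : ι → K) (B : ℝ) (hB : 0 ≤ B) (h : ∀ i ∈ s, ‖f i‖ ≤ B) :
    ‖∑ i ∈ s, f i‖ ≤ B := by
  induction s using Finset.cons_induction with
  | empty => simpa using hB
  | cons a s ha ih =>
      rw [Finset.sum_cons]
      exact le_trans (hna _ _) (max_le (h a (Finset.mem_cons_self _ _))
        (ih fun i hi => h i (Finset.mem_cons_of_mem hi)))

lemma aux_norm_nat_le_one (hna : ∀ x y : K, ‖x + y‖ ≤ max ‖x‖ ‖y‖) (m : ℕ) :
    ‖(m : K)‖ ≤ 1 := by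
  induction m with
  | zero => simp
  | succ n ih =>
      push_cast
      exact le_trans (hna _ _) (by simpa using ih)

lemma aux_pow_p_step (p : ℕ) [hp : Fact p.Prime]
    (hna : ∀ x y : K, ‖x + y‖ ≤ max ‖x‖ ‖y‖)
    (hpK : ‖(p : K)‖ = (p : ℝ)⁻¹)
    (u : K) (hu : ‖u - 1‖ < (p : ℝ) ^ (-(1 : ℝ) / ((p : ℝ) - 1))) :
    ‖u ^ p - 1‖ ≤ (p : ℝ)⁻¹ * ‖u - 1‖ := by
  have hp2 : 2 ≤ p := hp.out.two_le
  have hp1R : (1 : ℝ) < p := by exact_mod_cast hp2.trans_lt' one_lt_two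
  have hpR0 : (0 : ℝ) < p := by linarith
  set x : K := u - 1 with hx
  set r : ℝ := (p : ℝ) ^ (-(1 : ℝ) / ((p : ℝ) - 1)) with hr
  have hr1 : r ≤ 1 :=
    Real.rpow_le_one_of_one_le_of_nonpos hp1R.le
      (by apply div_nonpos_of_nonpos_of_nonneg <;> linarith)
  have hx1 : ‖x‖ ≤ 1 := le_trans hu.le hr1
  have hrpow : r ^ (p - 1) = (p : ℝ)⁻¹ := by
    rw [hr, ← Real.rpow_natCast ((p:ℝ) ^ (-(1:ℝ)/((p:ℝ)-1))) (p-1), ← Real.rpow_mul hpR0.le]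
    have hcast : ((p - 1 : ℕ) : ℝ) = (p : ℝ) - 1 := by
      have : (1:ℕ) ≤ p := by omega
      push_cast [this]; ring
    rw [hcast, div_mul_cancel₀, Real.rpow_neg_one]
    linarith
  have hxp1 : ‖x‖ ^ (p - 1) ≤ (p : ℝ)⁻¹ := by
    calc ‖x‖ ^ (p - 1) ≤ r ^ (p - 1) :=
          pow_le_pow_left₀ (norm_nonneg _) hu.le _
      _ = (p : ℝ)⁻¹ := hrpow
  have hexp : u ^ p - 1 = ∑ i ∈ Finset.range p, x ^ (i + 1) * (p.choose (i + 1) : K) := by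
    have : u = x + 1 := by rw [hx]; ring
    rw [this, add_pow]
    rw [Finset.sum_range_succ']
    simp
  rw [hexp]
  apply aux_norm_sum_le hna
  · positivity
  · intro i hi
    rw [Finset.mem_range] at hi
    rw [norm_mul, norm_pow]
    rcases eq_or_lt_of_le (Nat.succ_le_of_lt hi) with heq | hlt
    · -- i + 1 = p
      have h : i + 1 = p := heq
      rw [h, Nat.choose_self]
      simp only [Nat.cast_one, norm_one, mul_one]
      have hsplit : ‖x‖ ^ p = ‖x‖ ^ (p - 1) * ‖x‖ := by
        rw [← pow_succ]; congr 1; omega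
      rw [hsplit]
      exact mul_le_mul hxp1 le_rfl (norm_nonneg _) (by positivity)
    · -- 1 ≤ i+1 < p : p ∣ choose p (i+1)
      obtain ⟨t, ht⟩ := hp.out.dvd_choose_self (Nat.succ_ne_zero i) hlt
      rw [ht]
      push_cast
      rw [norm_mul, hpK]
      have h1 : ‖x‖ ^ (i + 1) ≤ ‖x‖ := by
        simpa using pow_le_pow_of_le_one (norm_nonneg _) hx1 (Nat.one_le_iff_ne_zero.mpr (Nat.succ_ne_zero i))
      have h2 : (p : ℝ)⁻¹ * ‖(t : K)‖ ≤ (p : ℝ)⁻¹ := by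
        have := aux_norm_nat_le_one hna t
        nlinarith [inv_pos.mpr hpR0]
      calc ‖x‖ ^ (i + 1) * ((p : ℝ)⁻¹ * ‖(t : K)‖)
          ≤ ‖x‖ * (p : ℝ)⁻¹ :=
            mul_le_mul h1 (by simpa using h2) (by positivity) (norm_nonneg _)
        _ = (p : ℝ)⁻¹ * ‖x‖ := by ring

lemma aux_pow_pn (p : ℕ) [hp : Fact p.Prime]
    (hna : ∀ x y : K, ‖x + y‖ ≤ max ‖x‖ ‖y‖)
    (hpK : ‖(p : K)‖ = (p : ℝ)⁻¹)
    (u : K) (hu : ‖u - 1‖ < (p : ℝ) ^ (-(1 : ℝ) / ((p : ℝ) - 1))) (n : ℕ) :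
    ‖u ^ p ^ n - 1‖ ≤ ((p : ℝ)⁻¹) ^ n * ‖u - 1‖ := by
  induction n with
  | zero => simp
  | succ n ih =>
      have hp1R : (1 : ℝ) < p := by exact_mod_cast hp.out.one_lt
      have hinv1 : ((p : ℝ)⁻¹) ^ n * ‖u - 1‖ ≤ ‖u - 1‖ := by
        have h1 : ((p : ℝ)⁻¹) ^ n ≤ 1 :=
          pow_le_one₀ (by positivity) (inv_le_one_of_one_le₀ hp1R.le)
        nlinarith [norm_nonneg (u - 1)]
      have hlt : ‖u ^ p ^ n - 1‖ < (p : ℝ) ^ (-(1 : ℝ) / ((p : ℝ) - 1)) :=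
        lt_of_le_of_lt (ih.trans hinv1) hu
      have hstep := aux_pow_p_step p hna hpK (u ^ p ^ n) hlt
      have hpow : (u ^ p ^ n) ^ p = u ^ p ^ (n + 1) := by
        rw [← pow_mul, pow_succ]
      rw [hpow] at hstep
      calc ‖u ^ p ^ (n + 1) - 1‖ ≤ (p : ℝ)⁻¹ * ‖u ^ p ^ n - 1‖ := hstep
        _ ≤ (p : ℝ)⁻¹ * (((p : ℝ)⁻¹) ^ n * ‖u - 1‖) := by
            have : (0:ℝ) ≤ (p : ℝ)⁻¹ := by positivity
            nlinarith
        _ = ((p : ℝ)⁻¹) ^ (n + 1) * ‖u - 1‖ := by ring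

end Aux

/-- Theorem 3.1: if `μ` is a strongly (ρ,q)-invariant p-adic distribution on `ℤ_p`
(constant on balls of radius `p^{-n}`), then its (ρ,q)-Radon–Nikodym derivative
`f_μ(x) = lim_n [p^n]_{ρ,q} μ(x,n)` exists and is a Lipschitz function. -/
theorem radonNikodym_derivative_lipschitz {K : Type*} [NormedField K] [CompleteSpace K]
    (p : ℕ) [Fact p.Prime] (hodd : Odd p)
    (hna : ∀ x y : K, ‖x + y‖ ≤ max ‖x‖ ‖y‖)
    (hpK : ‖(p : K)‖ = (p : ℝ)⁻¹)
    (ρ q : K) (hρq : ρ ≠ q)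
    (hρ : ‖ρ - 1‖ < (p : ℝ) ^ (-(1 : ℝ) / ((p : ℝ) - 1)))
    (hq : ‖q - 1‖ < (p : ℝ) ^ (-(1 : ℝ) / ((p : ℝ) - 1)))
    (μ : ℤ_[p] × ℕ → K)
    (hball : ∀ (x y : ℤ_[p]) (n : ℕ), ‖x - y‖ ≤ (p : ℝ) ^ (-(n : ℤ)) → μ (x, n) = μ (y, n))
    (C : ℝ) (hC : 0 < C)
    (hstrong : ∀ (x : ℤ_[p]) (n : ℕ),
      ‖pqNum ρ q (p ^ n) * μ (x, n) - pqNum ρ q (p ^ (n + 1)) * μ (x, n + 1)‖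
        ≤ C * ‖ρ ^ p ^ n - q ^ p ^ n‖) :
    ∃ (fμ : ℤ_[p] → K) (C₁ : ℝ), 0 ≤ C₁ ∧
      (∀ x : ℤ_[p],
        Filter.Tendsto (fun n : ℕ => pqNum ρ q (p ^ n) * μ (x, n)) Filter.atTop
          (nhds (fμ x))) ∧
      (∀ x y : ℤ_[p], ‖fμ x - fμ y‖ ≤ C₁ * ‖x - y‖) := by
  classical
  have hp : Fact p.Prime := inferInstance
  have hp1R : (1 : ℝ) < p := by exact_mod_cast hp.out.one_lt
  set M : ℝ := max ‖ρ - 1‖ ‖q - 1‖ with hM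
  have hM0 : 0 ≤ M := le_max_of_le_left (norm_nonneg _)
  set a : ℤ_[p] → ℕ → K := fun x n => pqNum ρ q (p ^ n) * μ (x, n) with ha
  -- key decay bound
  have hdecay : ∀ n : ℕ, ‖ρ ^ p ^ n - q ^ p ^ n‖ ≤ ((p : ℝ)⁻¹) ^ n * M := by
    intro n
    have h1 := aux_pow_pn p hna hpK ρ hρ n
    have h2 := aux_pow_pn p hna hpK q hq n
    have hsplit : ρ ^ p ^ n - q ^ p ^ n = (ρ ^ p ^ n - 1) - (q ^ p ^ n - 1) := by ring
    rw [hsplit]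
    refine le_trans (aux_norm_sub_le hna _ _) (max_le ?_ ?_)
    · exact h1.trans (by
        have : (0:ℝ) ≤ ((p:ℝ)⁻¹)^n := by positivity
        nlinarith [le_max_left ‖ρ - 1‖ ‖q - 1‖])
    · exact h2.trans (by
        have : (0:ℝ) ≤ ((p:ℝ)⁻¹)^n := by positivity
        nlinarith [le_max_right ‖ρ - 1‖ ‖q - 1‖])
  have hdiff : ∀ (x : ℤ_[p]) (n : ℕ),
      ‖a x n - a x (n + 1)‖ ≤ (C * M) * ((p : ℝ)⁻¹) ^ n := by
    intro x n
    refine le_trans (hstrong x n) ?_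
    have := hdecay n
    have hCn : (0:ℝ) ≤ C := hC.le
    nlinarith [norm_nonneg (ρ ^ p ^ n - q ^ p ^ n), pow_nonneg (inv_nonneg.mpr (by positivity : (0:ℝ) ≤ (p:ℝ))) n]
  -- Cauchy, hence convergent
  have hcauchy : ∀ x : ℤ_[p], CauchySeq (a x) := by
    intro x
    apply cauchySeq_of_le_geometric ((p : ℝ)⁻¹) (C * M) (by
      rw [inv_lt_one_iff₀]; right; exact hp1R)
    intro n
    rw [dist_eq_norm]
    exact hdiff x n
  choose fμ hfμ using fun x => cauchySeq_tendsto_of_complete (hcauchy x)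
  -- tail estimate
  have htail : ∀ (x : ℤ_[p]) (n : ℕ), ‖fμ x - a x n‖ ≤ (C * M) * ((p : ℝ)⁻¹) ^ n := by
    intro x n
    have hpartial : ∀ m, n ≤ m → ‖a x m - a x n‖ ≤ (C * M) * ((p : ℝ)⁻¹) ^ n := by
      intro m hm
      induction m with
      | zero =>
          have : n = 0 := Nat.le_zero.mp hm
          subst this
          simp only [sub_self, norm_zero]
          exact mul_nonneg (mul_nonneg hC.le hM0) (pow_nonneg (by positivity) _)
      | succ m ih =>
          rcases Nat.lt_or_ge n (m + 1) with hlt | hge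
          · have hnm : n ≤ m := Nat.lt_succ_iff.mp hlt
            have h1 := ih hnm
            have h2 : ‖a x (m + 1) - a x m‖ ≤ (C * M) * ((p : ℝ)⁻¹) ^ n := by
              rw [norm_sub_rev]
              refine le_trans (hdiff x m) ?_
              have hmono : ((p : ℝ)⁻¹) ^ m ≤ ((p : ℝ)⁻¹) ^ n :=
                pow_le_pow_of_le_one (by positivity) (inv_le_one_of_one_le₀ hp1R.le) hnm
              nlinarith [mul_nonneg hC.le hM0]
            have hsplit : a x (m + 1) - a x n = (a x (m + 1) - a x m) + (a x m - a x n) := by ring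
            rw [hsplit]
            exact le_trans (hna _ _) (max_le h2 h1)
          · have : n = m + 1 := le_antisymm hm hge
            subst this
            simp only [sub_self, norm_zero]
            exact mul_nonneg (mul_nonneg hC.le hM0) (pow_nonneg (by positivity) _)
    have htends : Filter.Tendsto (fun m => ‖a x m - a x n‖) Filter.atTop
        (nhds ‖fμ x - a x n‖) :=
      ((hfμ x).sub tendsto_const_nhds).norm
    refine le_of_tendsto htends ?_
    filter_upwards [Filter.eventually_ge_atTop n] with m hm using hpartial m hm
  refine ⟨fμ, C * M, mul_nonneg hC.le hM0, hfμ, ?_⟩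
  intro x y
  rcases eq_or_ne x y with rfl | hxy
  · simpa using mul_nonneg (mul_nonneg hC.le hM0) (norm_nonneg _)
  · have hne : x - y ≠ 0 := sub_ne_zero.mpr hxy
    have hval : ‖x - y‖ = (p : ℝ) ^ (-((x - y).valuation : ℤ)) := PadicInt.norm_eq_zpow_neg_valuation hne
    have hvnn : 0 ≤ ((x - y).valuation : ℤ) := Int.natCast_nonneg _
    set n : ℕ := ((x - y).valuation : ℤ).toNat with hn
    have hvn : ((x - y).valuation : ℤ) = (n : ℤ) := (Int.toNat_of_nonneg hvnn).symm
    have hnorm : ‖x - y‖ = (p : ℝ) ^ (-(n : ℤ)) := by rw [hval, hvn]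
    have heq : μ (x, n) = μ (y, n) := hball x y n (le_of_eq hnorm)
    have haeq : a x n = a y n := by rw [ha]; simp only; rw [heq]
    have h1 := htail x n
    have h2 := htail y n
    have hsplit : fμ x - fμ y = (fμ x - a x n) - (fμ y - a y n) := by
      rw [haeq]; ring
    rw [hsplit]
    refine le_trans (aux_norm_sub_le hna _ _) (le_trans (max_le h1 h2) ?_)
    have hpow : ((p : ℝ)⁻¹) ^ n = ‖x - y‖ := by
      rw [hnorm, zpow_neg, zpow_natCast, inv_pow]
    rw [hpow]
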